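/- The fundamental function satisfies the cardinal interpolation conditions: L_k(j) = 1 if j = 0 and L_k(j) = 0 for every nonzero integer j. -/

import Mathlib

open MeasureTheory Filter
open scoped ENNReal

noncomputable def S (α : ℝ) (k : ℕ) (ξ : ℝ) : ℝ :=
  ∑' j : ℤ, (((ξ - 2 * Real.pi * j) ^ 2 + α ^ 2) ^ k)⁻¹

noncomputable def Lhat (α : ℝ) (k : ℕ) (ξ : ℝ) : ℝ :=
  (Real.sqrt (2 * Real.pi))⁻¹ * ((ξ ^ 2 + α ^ 2) ^ k)⁻¹ / S α k ξ

noncomputable def Lk (α : ℝ) (k : ℕ) (x : ℝ) : ℝ :=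
  (((Real.sqrt (2 * Real.pi) : ℂ))⁻¹ *
    ∫ ξ : ℝ, (Lhat α k ξ : ℂ) * Complex.exp (Complex.I * x * ξ)).re

namespace Stmt4Aux

lemma summable_sq_inv : Summable (fun j : ℤ => ((j : ℝ) ^ 2)⁻¹) := by
  simpa [one_div] using (Real.summable_one_div_int_pow (p := 2)).mpr one_lt_two

lemma eventually_abs_large (N : ℤ) : ∀ᶠ j : ℤ in cofinite, N < |j| := by
  rw [Filter.eventually_cofinite]
  apply Set.Finite.subset (Set.finite_Icc (-N) N)
  intro j hj
  simp only [Set.mem_setOf_eq, not_lt] at hj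
  exact Set.mem_Icc.mpr (abs_le.mp hj)

lemma le_pow_of_le {a b : ℝ} (k : ℕ) (hk : 1 ≤ k) (h1 : 1 ≤ a) (hab : a ≤ b) : a ≤ b ^ k :=
  le_trans (le_self_pow₀ h1 (by omega)) (pow_le_pow_left₀ (by linarith) hab k)

lemma base_large {α ξ : ℝ} {j : ℤ} (hξj : |ξ| ≤ |(j:ℝ)|) :
    (j : ℝ) ^ 2 ≤ (ξ - 2 * Real.pi * j) ^ 2 + α ^ 2 := by
  have hpi : (2:ℝ) ≤ 2 * Real.pi := by nlinarith [Real.pi_gt_three]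
  have habs : |(j:ℝ)| ≤ |ξ - 2 * Real.pi * j| := by
    have h2 : 2 * |(j:ℝ)| ≤ |2 * Real.pi * j| := by
      rw [abs_mul, abs_of_nonneg (by positivity : (0:ℝ) ≤ 2 * Real.pi)]
      nlinarith [abs_nonneg (j:ℝ)]
    calc |(j:ℝ)| = 2 * |(j:ℝ)| - |(j:ℝ)| := by ring
    _ ≤ |2 * Real.pi * j| - |ξ| := by linarith
    _ ≤ |ξ - 2 * Real.pi * j| := by
        have := abs_sub_abs_le_abs_sub (2 * Real.pi * (j:ℝ)) ξ
        rw [abs_sub_comm] at this; linarith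
  nlinarith [sq_abs (j:ℝ), sq_abs (ξ - 2 * Real.pi * j), abs_nonneg (j:ℝ),
    sq_nonneg α, mul_self_le_mul_self (abs_nonneg (j:ℝ)) habs]

lemma term_le {α ξ : ℝ} {j : ℤ} (k : ℕ) (hk : 1 ≤ k) (h1 : 1 ≤ |(j:ℝ)|)
    (hξj : |ξ| ≤ |(j:ℝ)|) :
    (((ξ - 2 * Real.pi * j) ^ 2 + α ^ 2) ^ k)⁻¹ ≤ ((j : ℝ) ^ 2)⁻¹ := by
  have hb := base_large (α := α) hξj
  have hj1 : (1:ℝ) ≤ (j:ℝ)^2 := by nlinarith [sq_abs (j:ℝ)]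
  exact inv_anti₀ (by linarith) (le_pow_of_le k hk hj1 hb)

lemma term_summable (α : ℝ) (k : ℕ) (hk : 1 ≤ k) (ξ : ℝ) :
    Summable (fun j : ℤ => (((ξ - 2 * Real.pi * j) ^ 2 + α ^ 2) ^ k)⁻¹) := by
  apply Summable.of_norm_bounded_eventually (g := fun j : ℤ => ((j : ℝ) ^ 2)⁻¹) summable_sq_inv
  filter_upwards [eventually_abs_large (⌈|ξ|⌉ ⊔ 1)] with j hj
  have habs : ((|j|:ℤ):ℝ) = |(j:ℝ)| := by push_cast [Int.cast_abs]; ring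
  have h1 : (1 : ℝ) ≤ |(j : ℝ)| := by
    rw [← habs]; exact_mod_cast le_of_lt (lt_of_le_of_lt (le_max_right _ _) hj)
  have hξj : |ξ| ≤ |(j : ℝ)| := by
    calc |ξ| ≤ (⌈|ξ|⌉ : ℝ) := Int.le_ceil _
    _ ≤ ((|j|:ℤ):ℝ) := by exact_mod_cast le_of_lt (lt_of_le_of_lt (le_max_left _ _) hj)
    _ = |(j:ℝ)| := habs
  rw [Real.norm_eq_abs, abs_of_nonneg (by positivity)]
  exact term_le k hk h1 hξj

lemma S_lower (α : ℝ) (hα : 0 < α) (k : ℕ) (hk : 1 ≤ k) (ξ : ℝ) :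
    ((Real.pi ^ 2 + α ^ 2) ^ k)⁻¹ ≤ S α k ξ := by
  set j : ℤ := round (ξ / (2 * Real.pi)) with hj
  have hπ : (0:ℝ) < 2 * Real.pi := by positivity
  have hdist : |ξ - 2 * Real.pi * j| ≤ Real.pi := by
    have := abs_sub_round (ξ / (2 * Real.pi))
    have heq : ξ - 2 * Real.pi * j = 2 * Real.pi * (ξ / (2 * Real.pi) - j) := by
      field_simp
    rw [heq, abs_mul, abs_of_pos hπ]
    calc 2 * Real.pi * |ξ / (2 * Real.pi) - ↑j| ≤ 2 * Real.pi * (1/2) := by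
          exact mul_le_mul_of_nonneg_left this (le_of_lt hπ)
    _ = Real.pi := by ring
  have hterm : ((Real.pi ^ 2 + α ^ 2) ^ k)⁻¹ ≤ (((ξ - 2 * Real.pi * j) ^ 2 + α ^ 2) ^ k)⁻¹ := by
    apply inv_anti₀ (by positivity)
    apply pow_le_pow_left₀ (by positivity)
    have : (ξ - 2 * Real.pi * j)^2 ≤ Real.pi ^ 2 := by
      nlinarith [sq_abs (ξ - 2 * Real.pi * j), abs_nonneg (ξ - 2 * Real.pi * j), Real.pi_pos]
    linarith
  exact le_trans hterm (Summable.le_tsum (term_summable α k hk ξ) j (fun _ _ => by positivity))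

lemma S_pos (α : ℝ) (hα : 0 < α) (k : ℕ) (hk : 1 ≤ k) (ξ : ℝ) : 0 < S α k ξ :=
  lt_of_lt_of_le (by positivity) (S_lower α hα k hk ξ)

lemma S_shift (α : ℝ) (k : ℕ) (ξ : ℝ) (n : ℤ) :
    S α k (ξ + 2 * Real.pi * n) = S α k ξ := by
  unfold S
  rw [← (Equiv.subRight n).tsum_eq (fun j : ℤ => (((ξ - 2 * Real.pi * j) ^ 2 + α ^ 2) ^ k)⁻¹)]
  apply tsum_congr
  intro j
  have : ξ + 2 * Real.pi * n - 2 * Real.pi * j = ξ - 2 * Real.pi * ((j - n : ℤ) : ℝ) := by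
    push_cast; ring
  simp only [Equiv.subRight_apply, this]

lemma S_measurable (α : ℝ) (k : ℕ) (hk : 1 ≤ k) : Measurable (S α k) := by
  have heq : S α k = fun ξ =>
      (∑' j : ℤ, ENNReal.ofReal ((((ξ - 2 * Real.pi * j) ^ 2 + α ^ 2) ^ k)⁻¹)).toReal := by
    funext ξ
    rw [← ENNReal.ofReal_tsum_of_nonneg (fun j => by positivity) (term_summable α k hk ξ),
      ENNReal.toReal_ofReal (tsum_nonneg (fun j => by positivity))]
    rfl
  rw [heq]
  apply ENNReal.measurable_toReal.comp
  apply Measurable.ennreal_tsum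
  intro j
  apply Measurable.ennreal_ofReal
  fun_prop

lemma Lhat_nonneg (α : ℝ) (hα : 0 < α) (k : ℕ) (hk : 1 ≤ k) (ξ : ℝ) : 0 ≤ Lhat α k ξ := by
  unfold Lhat
  have := S_pos α hα k hk ξ
  positivity

lemma Lhat_le (α : ℝ) (hα : 0 < α) (k : ℕ) (hk : 1 ≤ k) (ξ : ℝ) :
    Lhat α k ξ ≤ ((Real.sqrt (2 * Real.pi))⁻¹ * (Real.pi ^ 2 + α ^ 2) ^ k *
      ((min (α ^ 2) 1) ^ k)⁻¹) * (1 + ξ ^ 2)⁻¹ := by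
  have hS := S_pos α hα k hk ξ
  have hSl := S_lower α hα k hk ξ
  have hc0 : (0:ℝ) < (Real.sqrt (2 * Real.pi))⁻¹ := by
    have : (0:ℝ) < Real.sqrt (2 * Real.pi) := Real.sqrt_pos.mpr (by positivity)
    positivity
  set m := min (α ^ 2) 1 with hm
  have hm0 : 0 < m := lt_min (by positivity) one_pos
  have hA : ((ξ ^ 2 + α ^ 2) ^ k)⁻¹ ≤ (m ^ k)⁻¹ * (1 + ξ ^ 2)⁻¹ := by
    rw [← mul_inv]
    apply inv_anti₀ (by positivity)
    calc m ^ k * (1 + ξ ^ 2) ≤ m ^ k * (1 + ξ ^ 2) ^ k := by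
          have h1 : (1:ℝ) ≤ 1 + ξ ^ 2 := by nlinarith [sq_nonneg ξ]
          exact mul_le_mul_of_nonneg_left (le_self_pow₀ h1 (by omega)) (by positivity)
    _ = (m * (1 + ξ ^ 2)) ^ k := by rw [mul_pow]
    _ ≤ (ξ ^ 2 + α ^ 2) ^ k := by
          apply pow_le_pow_left₀ (by positivity)
          have h1 : m ≤ α ^ 2 := min_le_left _ _
          have h2 : m ≤ 1 := min_le_right _ _
          nlinarith [sq_nonneg ξ]
  have hinvS : (S α k ξ)⁻¹ ≤ (Real.pi ^ 2 + α ^ 2) ^ k := by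
    rw [← inv_inv ((Real.pi ^ 2 + α ^ 2) ^ k)]
    exact inv_anti₀ (by positivity) hSl
  unfold Lhat
  rw [div_eq_mul_inv]
  calc (Real.sqrt (2 * Real.pi))⁻¹ * ((ξ ^ 2 + α ^ 2) ^ k)⁻¹ * (S α k ξ)⁻¹
      ≤ (Real.sqrt (2 * Real.pi))⁻¹ * ((m ^ k)⁻¹ * (1 + ξ ^ 2)⁻¹) * (Real.pi ^ 2 + α ^ 2) ^ k := by
        apply mul_le_mul (mul_le_mul_of_nonneg_left hA (le_of_lt hc0)) hinvS
          (by positivity) (by positivity)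
  _ = (Real.sqrt (2 * Real.pi))⁻¹ * (Real.pi ^ 2 + α ^ 2) ^ k * ((min (α ^ 2) 1) ^ k)⁻¹
        * (1 + ξ ^ 2)⁻¹ := by rw [← hm]; ring

lemma Lhat_measurable (α : ℝ) (k : ℕ) (hk : 1 ≤ k) : Measurable (Lhat α k) := by
  unfold Lhat
  apply Measurable.div _ (S_measurable α k hk)
  fun_prop

lemma Lhat_integrable (α : ℝ) (hα : 0 < α) (k : ℕ) (hk : 1 ≤ k) :
    Integrable (Lhat α k) := by
  set C := (Real.sqrt (2 * Real.pi))⁻¹ * (Real.pi ^ 2 + α ^ 2) ^ k * ((min (α ^ 2) 1) ^ k)⁻¹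
  apply Integrable.mono' (g := fun ξ : ℝ => C * (1 + ξ ^ 2)⁻¹)
    (integrable_inv_one_add_sq.const_mul C)
    (Lhat_measurable α k hk).aestronglyMeasurable
  filter_upwards with ξ
  rw [Real.norm_eq_abs, abs_of_nonneg (Lhat_nonneg α hα k hk ξ)]
  exact Lhat_le α hα k hk ξ

lemma norm_exp_I_mul (x ξ : ℝ) : ‖Complex.exp (Complex.I * x * ξ)‖ = 1 := by
  have : Complex.I * (x:ℂ) * (ξ:ℂ) = ((x * ξ : ℝ) : ℂ) * Complex.I := by push_cast; ring
  rw [this, Complex.norm_exp_ofReal_mul_I]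

lemma integrand_integrable (α : ℝ) (hα : 0 < α) (k : ℕ) (hk : 1 ≤ k) (x : ℝ) :
    Integrable (fun ξ : ℝ => (Lhat α k ξ : ℂ) * Complex.exp (Complex.I * x * ξ)) := by
  apply Integrable.mono' ((Lhat_integrable α hα k hk).norm)
  · apply AEStronglyMeasurable.mul
    · exact (Complex.measurable_ofReal.comp (Lhat_measurable α k hk)).aestronglyMeasurable
    · exact (Continuous.aestronglyMeasurable (by fun_prop))
  · filter_upwards with ξ
    rw [norm_mul, norm_exp_I_mul, mul_one, Complex.norm_real]

lemma sum_shifted (α : ℝ) (k : ℕ) (ξ : ℝ) :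
    ∑' n : ℤ, ((((n:ℝ) * (2 * Real.pi) + ξ) ^ 2 + α ^ 2) ^ k)⁻¹ = S α k ξ := by
  unfold S
  rw [← (Equiv.neg ℤ).tsum_eq (fun m : ℤ => (((ξ - 2 * Real.pi * m) ^ 2 + α ^ 2) ^ k)⁻¹)]
  apply tsum_congr
  intro n
  simp only [Equiv.neg_apply]
  congr 2
  push_cast
  ring

lemma key (α : ℝ) (hα : 0 < α) (k : ℕ) (hk : 1 ≤ k) (j : ℤ) :
    (∫ ξ : ℝ, (Lhat α k ξ : ℂ) * Complex.exp (Complex.I * ((j:ℝ):ℂ) * ξ))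
      = ((Real.sqrt (2 * Real.pi) : ℂ))⁻¹ *
        ∫ ξ in Set.Ioc (0:ℝ) (2 * Real.pi), Complex.exp (Complex.I * ((j:ℝ):ℂ) * ξ) := by
  have hπ : (0:ℝ) < Real.pi := Real.pi_pos
  set T : ℝ := 2 * Real.pi with hTdef
  have hT : 0 < T := by positivity
  set f : ℝ → ℂ := fun ξ => (Lhat α k ξ : ℂ) * Complex.exp (Complex.I * ((j:ℝ):ℂ) * ξ)
    with hfdef
  set E : ℝ → ℂ := fun ξ => Complex.exp (Complex.I * ((j:ℝ):ℂ) * ξ) with hEdef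
  set c0 : ℝ := (Real.sqrt (2 * Real.pi))⁻¹ with hc0def
  have hc0 : (0:ℝ) < c0 := by
    have : (0:ℝ) < Real.sqrt (2 * Real.pi) := Real.sqrt_pos.mpr (by positivity)
    positivity
  set P : ℝ := (Real.pi ^ 2 + α ^ 2) ^ k with hPdef
  have hP : 0 < P := by positivity
  set u : ℤ → ℝ → ℝ := fun n ξ => ((((n:ℝ) * T + ξ) ^ 2 + α ^ 2) ^ k)⁻¹ with hudef
  set F : ℤ → ℝ → ℂ := fun n ξ => ((c0 * u n ξ / S α k ξ : ℝ) : ℂ) * E ξ with hFdef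
  haveI : VAddInvariantMeasure (AddSubgroup.zmultiples T) ℝ volume :=
    ⟨fun c s _ => measure_preimage_add _ _ _⟩
  have hfd : IsAddFundamentalDomain (AddSubgroup.zmultiples T) (Set.Ioc 0 (0 + T)) volume :=
    isAddFundamentalDomain_Ioc hT 0
  have hint : Integrable f := integrand_integrable α hα k hk (j:ℝ)
  have h1 : ∫ ξ, f ξ = ∑' g : AddSubgroup.zmultiples T, ∫ x in Set.Ioc (0:ℝ) (0 + T), f (g +ᵥ x) :=
    hfd.integral_eq_tsum'' f hint
  -- reindex over ℤ
  have hinj : Function.Injective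
      (fun n : ℤ => (⟨n • T, AddSubgroup.zsmul_mem_zmultiples T n⟩ : AddSubgroup.zmultiples T)) :=
    fun a b h => (zsmul_left_strictMono hT).injective (Subtype.mk_eq_mk.mp h)
  have hsurj : Function.Surjective
      (fun n : ℤ => (⟨n • T, AddSubgroup.zsmul_mem_zmultiples T n⟩ : AddSubgroup.zmultiples T)) := by
    rintro ⟨x, hx⟩
    obtain ⟨n, rfl⟩ := AddSubgroup.mem_zmultiples_iff.mp hx
    exact ⟨n, rfl⟩
  set e : ℤ ≃ AddSubgroup.zmultiples T := Equiv.ofBijective _ ⟨hinj, hsurj⟩ with hedef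
  rw [← e.tsum_eq (fun g : AddSubgroup.zmultiples T => ∫ x in Set.Ioc (0:ℝ) (0 + T), f (g +ᵥ x))]
    at h1
  -- rewrite each summand
  have hSsh : ∀ (n : ℤ) (ξ : ℝ), S α k ((n:ℝ) * T + ξ) = S α k ξ := by
    intro n ξ
    rw [show (n:ℝ) * T + ξ = ξ + 2 * Real.pi * n by rw [hTdef]; ring]
    exact S_shift α k ξ n
  have hterm : ∀ n : ℤ, (∫ x in Set.Ioc (0:ℝ) (0 + T), f ((e n) +ᵥ x))
      = ∫ ξ in Set.Ioc (0:ℝ) (0 + T), F n ξ := by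
    intro n
    apply integral_congr_ae
    filter_upwards with ξ
    have hvadd : (e n) +ᵥ ξ = (n:ℝ) * T + ξ := by
      show ((e n : ℝ)) + ξ = (n:ℝ) * T + ξ
      have : (e n : ℝ) = n • T := rfl
      rw [this, zsmul_eq_mul]
    rw [hvadd, hfdef]
    simp only
    have hLhat : Lhat α k ((n:ℝ) * T + ξ) = c0 * u n ξ / S α k ξ := by
      unfold Lhat
      rw [hSsh n ξ]
    have hexp : Complex.exp (Complex.I * ((j:ℝ):ℂ) * ((((n:ℝ) * T + ξ) : ℝ) : ℂ))
        = E ξ := by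
      have harg : Complex.I * ((j:ℝ):ℂ) * ((((n:ℝ) * T + ξ) : ℝ) : ℂ)
          = Complex.I * ((j:ℝ):ℂ) * (ξ:ℂ) + ((j * n : ℤ):ℂ) * (2 * (Real.pi:ℂ) * Complex.I) := by
        rw [hTdef]; push_cast; ring
      rw [harg, Complex.exp_add, Complex.exp_int_mul_two_pi_mul_I, mul_one, hEdef]
    rw [hLhat, hexp, hFdef]
  simp only [hterm] at h1
  -- integrability of each F n on the box
  have hFmeas : ∀ n : ℤ, AEStronglyMeasurable (F n)
      (volume.restrict (Set.Ioc (0:ℝ) (0 + T))) := by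
    intro n
    apply AEStronglyMeasurable.mul
    · apply Measurable.aestronglyMeasurable
      apply Complex.measurable_ofReal.comp
      apply Measurable.div _ (S_measurable α k hk)
      fun_prop
    · exact Continuous.aestronglyMeasurable (by fun_prop)
  have hrnonneg : ∀ (n : ℤ) (ξ : ℝ), 0 ≤ c0 * u n ξ / S α k ξ := by
    intro n ξ
    have := S_pos α hα k hk ξ
    have : 0 ≤ u n ξ := by rw [hudef]; positivity
    have := S_pos α hα k hk ξ
    positivity
  have hFnorm : ∀ (n : ℤ) (ξ : ℝ), ‖F n ξ‖ = c0 * u n ξ / S α k ξ := by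
    intro n ξ
    rw [hFdef]
    simp only
    rw [norm_mul, Complex.norm_real, Real.norm_eq_abs, abs_of_nonneg (hrnonneg n ξ),
      hEdef]
    simp only
    rw [norm_exp_I_mul, mul_one]
  have hrle : ∀ (n : ℤ) (ξ : ℝ), c0 * u n ξ / S α k ξ ≤ c0 * P * u n ξ := by
    intro n ξ
    have hS := S_pos α hα k hk ξ
    have hSl := S_lower α hα k hk ξ
    have hu0 : 0 ≤ u n ξ := by rw [hudef]; positivity
    rw [div_eq_mul_inv]
    have hinvS : (S α k ξ)⁻¹ ≤ P := by
      rw [hPdef, ← inv_inv ((Real.pi ^ 2 + α ^ 2) ^ k)]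
      exact inv_anti₀ (by positivity) hSl
    calc c0 * u n ξ * (S α k ξ)⁻¹ ≤ c0 * u n ξ * P :=
          mul_le_mul_of_nonneg_left hinvS (by positivity)
    _ = c0 * P * u n ξ := by ring
  have hFint : ∀ n : ℤ, Integrable (F n) (volume.restrict (Set.Ioc (0:ℝ) (0 + T))) := by
    intro n
    apply Integrable.mono' (g := fun _ : ℝ => c0 * P * ((α ^ 2) ^ k)⁻¹)
      (integrableOn_const measure_Ioc_lt_top.ne) (hFmeas n)
    filter_upwards with ξ
    rw [hFnorm n ξ]
    refine le_trans (hrle n ξ) ?_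
    apply mul_le_mul_of_nonneg_left _ (by positivity)
    rw [hudef]
    apply inv_anti₀ (by positivity)
    apply pow_le_pow_left₀ (by positivity)
    nlinarith [sq_nonneg ((n:ℝ) * T + ξ)]
  -- summability of integrals of norms
  have hFsum : Summable (fun n : ℤ => ∫ ξ in Set.Ioc (0:ℝ) (0 + T), ‖F n ξ‖) := by
    apply Summable.of_norm_bounded_eventually (g := fun n : ℤ => (c0 * P * (2 * Real.pi)) * ((n:ℝ) ^ 2)⁻¹)
      (summable_sq_inv.mul_left _)
    filter_upwards [eventually_abs_large 7] with n hn
    have habs : ((|n|:ℤ):ℝ) = |(n:ℝ)| := by push_cast [Int.cast_abs]; ring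
    have h7 : (7:ℝ) ≤ |(n:ℝ)| := by
      rw [← habs]; exact_mod_cast le_of_lt hn
    have hb : ∀ ξ ∈ Set.Ioc (0:ℝ) (0 + T), ‖F n ξ‖ ≤ c0 * P * ((n:ℝ) ^ 2)⁻¹ := by
      intro ξ hξ
      rw [hFnorm n ξ]
      refine le_trans (hrle n ξ) ?_
      apply mul_le_mul_of_nonneg_left _ (by positivity)
      have hune : u n ξ = (((ξ - 2 * Real.pi * ((-n : ℤ):ℝ)) ^ 2 + α ^ 2) ^ k)⁻¹ := by
        rw [hudef]
        congr 2
        push_cast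
        rw [hTdef]
        ring
      rw [hune]
      have h1n : (1:ℝ) ≤ |((-n : ℤ):ℝ)| := by push_cast; rw [abs_neg]; linarith
      have hξn : |ξ| ≤ |((-n : ℤ):ℝ)| := by
        push_cast; rw [abs_neg]
        have h2π : (0:ℝ) < ξ ∧ ξ ≤ 0 + T := ⟨hξ.1, hξ.2⟩
        have : |ξ| ≤ T := by
          rw [abs_of_pos h2π.1]; linarith [h2π.2]
        have hT7 : T ≤ 7 := by rw [hTdef]; nlinarith [Real.pi_lt_d2]
        linarith
      have := term_le (α := α) (ξ := ξ) (j := -n) k hk h1n hξn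
      refine le_trans this ?_
      apply le_of_eq
      congr 1
      push_cast
      ring
    have hnonneg : 0 ≤ ∫ ξ in Set.Ioc (0:ℝ) (0 + T), ‖F n ξ‖ :=
      integral_nonneg (fun _ => norm_nonneg _)
    rw [Real.norm_of_nonneg hnonneg]
    calc (∫ ξ in Set.Ioc (0:ℝ) (0 + T), ‖F n ξ‖)
        ≤ ∫ _ in Set.Ioc (0:ℝ) (0 + T), c0 * P * ((n:ℝ) ^ 2)⁻¹ := by
          apply setIntegral_mono_on (hFint n).norm
            (integrableOn_const measure_Ioc_lt_top.ne) measurableSet_Ioc hb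
    _ = (volume (Set.Ioc (0:ℝ) (0 + T))).toReal * (c0 * P * ((n:ℝ) ^ 2)⁻¹) := by
          rw [setIntegral_const]; rfl
    _ ≤ c0 * P * (2 * Real.pi) * ((n:ℝ) ^ 2)⁻¹ := by
          rw [Real.volume_Ioc, zero_add, ENNReal.toReal_ofReal (by linarith : (0:ℝ) ≤ T - 0)]
          rw [hTdef]
          apply le_of_eq
          ring
  have hswap : ∑' n : ℤ, ∫ ξ in Set.Ioc (0:ℝ) (0 + T), F n ξ
      = ∫ ξ in Set.Ioc (0:ℝ) (0 + T), ∑' n : ℤ, F n ξ :=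
    integral_tsum_of_summable_integral_norm hFint hFsum
  -- compute the inner sum
  have hinner : ∀ ξ : ℝ, ∑' n : ℤ, F n ξ = ((c0 : ℝ) : ℂ) * E ξ := by
    intro ξ
    have hS := S_pos α hα k hk ξ
    have hsum : ∑' n : ℤ, u n ξ = S α k ξ := sum_shifted α k ξ
    rw [hFdef]
    simp only
    rw [tsum_mul_right, ← Complex.ofReal_tsum]
    congr 2
    have : ∀ n : ℤ, c0 * u n ξ / S α k ξ = (c0 / S α k ξ) * u n ξ := fun n => by ring
    rw [tsum_congr this, tsum_mul_left, hsum]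
    field_simp
  rw [h1, hswap]
  have : ∀ ξ : ℝ, ∑' n : ℤ, F n ξ = ((c0 : ℝ) : ℂ) * E ξ := hinner
  rw [integral_congr_ae (Eventually.of_forall (fun ξ => hinner ξ))]
  simp only [zero_add]
  rw [MeasureTheory.integral_const_mul]
  congr 1
  rw [hc0def, Complex.ofReal_inv]

end Stmt4Aux

theorem stmt_4 (α : ℝ) (hα : 0 < α) (k : ℕ) (hk : 1 ≤ k) :
    Lk α k 0 = 1 ∧ ∀ j : ℤ, j ≠ 0 → Lk α k (j : ℝ) = 0 := by
  have hπ : (0:ℝ) < Real.pi := Real.pi_pos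
  have hsqpos : (0:ℝ) < Real.sqrt (2 * Real.pi) := Real.sqrt_pos.mpr (by positivity)
  have hne : ((Real.sqrt (2 * Real.pi) : ℝ):ℂ) ≠ 0 := by
    exact_mod_cast ne_of_gt hsqpos
  have hsq : ((Real.sqrt (2 * Real.pi) : ℝ):ℂ) * ((Real.sqrt (2 * Real.pi) : ℝ):ℂ)
      = ((2 * Real.pi : ℝ):ℂ) := by
    norm_cast
    exact Real.mul_self_sqrt (by positivity)
  constructor
  · unfold Lk
    have hkey := Stmt4Aux.key α hα k hk 0
    simp only [Int.cast_zero, Complex.ofReal_zero, mul_zero, zero_mul, Complex.exp_zero,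
      mul_one] at hkey ⊢
    rw [hkey, setIntegral_const, measureReal_def, Real.volume_Ioc, sub_zero,
      ENNReal.toReal_ofReal (by positivity : (0:ℝ) ≤ 2 * Real.pi)]
    have : (((Real.sqrt (2 * Real.pi) : ℝ):ℂ))⁻¹ *
        ((((Real.sqrt (2 * Real.pi) : ℝ):ℂ))⁻¹ * ((2 * Real.pi : ℝ) • (1:ℂ))) = 1 := by
      rw [Complex.real_smul, mul_one, ← hsq]
      rw [show (((Real.sqrt (2 * Real.pi) : ℝ):ℂ))⁻¹ * ((((Real.sqrt (2 * Real.pi) : ℝ):ℂ))⁻¹ *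
        (((Real.sqrt (2 * Real.pi) : ℝ):ℂ) * ((Real.sqrt (2 * Real.pi) : ℝ):ℂ)))
        = ((((Real.sqrt (2 * Real.pi) : ℝ):ℂ))⁻¹ * ((Real.sqrt (2 * Real.pi) : ℝ):ℂ)) *
          ((((Real.sqrt (2 * Real.pi) : ℝ):ℂ))⁻¹ * ((Real.sqrt (2 * Real.pi) : ℝ):ℂ)) by ring,
        inv_mul_cancel₀ hne, mul_one]
    rw [this, Complex.one_re]
  · intro j hj
    unfold Lk
    have hkey := Stmt4Aux.key α hα k hk j
    rw [hkey]
    have hjc : ((j:ℝ):ℂ) ≠ 0 := by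
      simp only [ne_eq, Complex.ofReal_eq_zero]
      exact_mod_cast hj
    have hc : Complex.I * ((j:ℝ):ℂ) ≠ 0 := mul_ne_zero Complex.I_ne_zero hjc
    rw [← intervalIntegral.integral_of_le (by positivity : (0:ℝ) ≤ 2 * Real.pi),
      integral_exp_mul_complex hc]
    have h2 : Complex.exp (Complex.I * ((j:ℝ):ℂ) * ((2 * Real.pi : ℝ):ℂ)) = 1 := by
      rw [show Complex.I * ((j:ℝ):ℂ) * ((2 * Real.pi : ℝ):ℂ)
          = ((j:ℤ):ℂ) * (2 * (Real.pi:ℂ) * Complex.I) by push_cast; ring]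
      exact Complex.exp_int_mul_two_pi_mul_I j
    rw [h2]
    simp
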